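/- arXiv:1707.05752 — 4 statements merged into one kernel-verified Lean document; each statement's English description precedes it below -/
import Mathlib

section
/- Let C be a triangulated category equipped with a bounded t-structure t, with heart C^{t=0} and cohomology functors H^m : C → C^{t=0} (m ∈ ℤ). Let M and N be objects of C, and α : M → N a morphism such that H^m(α) = 0 for all m ∈ ℤ. Then α belongs to the radical rad_C(M,N); that is, for every morphism β : N → M the endomorphism id_M − β∘α of M is an isomorphism. (Proposition 1.D) -/
open CategoryTheory Limits Pretriangulated ZeroObject

namespace Absolute

universe v u

/-- The radical of a preadditive category: `α : M ⟶ N` belongs to the radical if and only if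
for every `β : N ⟶ M`, the endomorphism `𝟙 M - β ∘ α` of `M` is an isomorphism. -/
def radical {C : Type u} [Category.{v} C] [Preadditive C] (M N : C) : Set (M ⟶ N) :=
  {α | ∀ β : N ⟶ M, IsIso (𝟙 M - α ≫ β)}

variable (C : Type u) [Category.{v} C] [Preadditive C] [HasZeroObject C]
  [HasShift C ℤ] [∀ n : ℤ, (shiftFunctor C n).Additive] [Pretriangulated C]

/-- A bounded t-structure `t` on a triangulated category `C`, given by the classes
`tle n = C^{t ≤ n}` and `tge n = C^{t ≥ n}`, together with its truncation functors and
the associated cohomology functors `H m` with values in the heart `C^{t = 0}`. -/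
structure BoundedTStructure where
  tle : ℤ → Set C
  tge : ℤ → Set C
  tle_iso : ∀ (n : ℤ) ⦃X Y : C⦄, (X ≅ Y) → X ∈ tle n → Y ∈ tle n
  tge_iso : ∀ (n : ℤ) ⦃X Y : C⦄, (X ≅ Y) → X ∈ tge n → Y ∈ tge n
  /-- `C^{t ≤ n} := C^{t ≤ 0}[-n]`, i.e. the cohomological indexing convention -/
  tle_shift : ∀ (n k : ℤ) (X : C), X ∈ tle n ↔ X⟦k⟧ ∈ tle (n - k)
  tge_shift : ∀ (n k : ℤ) (X : C), X ∈ tge n ↔ X⟦k⟧ ∈ tge (n - k)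
  tle_mono : ∀ n : ℤ, tle n ⊆ tle (n + 1)
  tge_anti : ∀ n : ℤ, tge (n + 1) ⊆ tge n
  t_orth : ∀ ⦃X Y : C⦄, X ∈ tle 0 → Y ∈ tge 1 → ∀ f : X ⟶ Y, f = 0
  t_bounded : ∀ M : C, ∃ m n : ℤ, M ∈ tge m ∧ M ∈ tle n
  /-- truncation functor `τ^{t ≤ m}` -/
  τle : ℤ → C ⥤ C
  /-- truncation functor `τ^{t ≥ m}` -/
  τge : ℤ → C ⥤ C
  τle_mem : ∀ (m : ℤ) (X : C), (τle m).obj X ∈ tle m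
  τge_mem : ∀ (m : ℤ) (X : C), (τge m).obj X ∈ tge m
  τleε : ∀ m : ℤ, τle m ⟶ 𝟭 C
  τgeη : ∀ m : ℤ, 𝟭 C ⟶ τge m
  τ_triangle : ∀ (m : ℤ) (X : C), ∃ h : (τge (m + 1)).obj X ⟶ ((τle m).obj X)⟦(1 : ℤ)⟧,
    Triangle.mk ((τleε m).app X) ((τgeη (m + 1)).app X) h ∈ distTriang C
  /-- the cohomology functors `H^m : C ⥤ C^{t = 0}`, viewed as endofunctors of `C` with
  values in the heart -/
  H : ℤ → C ⥤ C
  H_additive : ∀ m : ℤ, (H m).Additive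
  H_heart : ∀ (m : ℤ) (X : C), (H m).obj X ∈ tle 0 ∧ (H m).obj X ∈ tge 0
  H_shift : ∀ m : ℤ, Nonempty (shiftFunctor C (1 : ℤ) ⋙ H m ≅ H (m + 1))
  H_heart_id : ∀ X : C, X ∈ tle 0 → X ∈ tge 0 → Nonempty ((H 0).obj X ≅ X)
  H_vanish_le : ∀ (m n : ℤ) (X : C), X ∈ tle n → n < m → IsZero ((H m).obj X)
  H_vanish_ge : ∀ (m n : ℤ) (X : C), X ∈ tge n → m < n → IsZero ((H m).obj X)
  /-- the family of cohomology functors associated to a bounded t-structure is conservative -/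
  H_conservative : ∀ ⦃X Y : C⦄ (f : X ⟶ Y), (∀ m : ℤ, IsIso ((H m).map f)) → IsIso f

/-- The intersection `C^{t = m} = C^{t ≤ m} ∩ C^{t ≥ m}`. -/
def BoundedTStructure.tEq (t : BoundedTStructure C) (m : ℤ) : Set C :=
  t.tle m ∩ t.tge m


/-- Proposition 1.D: if `C` carries a bounded t-structure with cohomology functors `H^m`,
and `α : M ⟶ N` satisfies `H^m(α) = 0` for all `m ∈ ℤ`, then `α` belongs to the radical
`rad_C(M, N)`; that is, for every `β : N ⟶ M`, the endomorphism `𝟙 M - β ∘ α` of `M`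
is an isomorphism. -/
theorem proposition_1D (t : BoundedTStructure C) (M N : C) (α : M ⟶ N)
    (h : ∀ m : ℤ, (t.H m).map α = 0) :
    α ∈ radical M N := by
  intro β
  apply t.H_conservative
  intro m
  haveI := t.H_additive m
  have e : (t.H m).map (𝟙 M - α ≫ β) = 𝟙 _ := by
    rw [Functor.map_sub, CategoryTheory.Functor.map_id, Functor.map_comp, h, zero_comp, sub_zero]
  rw [e]
  infer_instance

end Absolute
end

section
/- Let C be a triangulated category carrying a bounded weight structure w and a bounded t-structure t satisfying the transversality properties (a)–(d). Let r, n ∈ ℤ, let M be an object of C^{t=r} ∩ C_{w≥n} and N an object of C^{t=r} ∩ C_{w≤n}, and let γ : M → N be a nonzero morphism. Then there exists β : N → M such that β∘γ is a nonzero idempotent endomorphism of M (a projector onto a nonzero direct factor of M); in particular γ does not belong to rad_C(M,N). (Claim (∗) in the proof of Theorem 1.F) -/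
open CategoryTheory Limits Pretriangulated ZeroObject

namespace Absolute

universe v u

/-- Full subcategories of preadditive categories are preadditive. -/
instance fullSubcategoryPreadditive {C : Type u} [Category.{v} C] [Preadditive C]
    (Z : C → Prop) : Preadditive (ObjectProperty.FullSubcategory Z) where
  homGroup X Y := InducedCategory.homEquiv.addCommGroup
  add_comp _ _ _ f f' g := by ext; exact Preadditive.add_comp _ _ _ f.hom f'.hom g.hom
  comp_add _ _ _ f g g' := by ext; exact Preadditive.comp_add _ _ _ f.hom g.hom g'.hom

/-- The property that morphisms `f : A ⟶ M` and `g : M ⟶ B` between objects satisfying `Z`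
form a short exact sequence `0 ⟶ A ⟶ M ⟶ B ⟶ 0` in the full subcategory of objects
satisfying `Z`. -/
def IsShortExactInSub {C : Type u} [Category.{v} C] [Preadditive C] (Z : C → Prop)
    {A M B : C} (hA : Z A) (hM : Z M) (hB : Z B) (f : A ⟶ M) (g : M ⟶ B) : Prop :=
  let A' : ObjectProperty.FullSubcategory Z := ⟨A, hA⟩
  let M' : ObjectProperty.FullSubcategory Z := ⟨M, hM⟩
  let B' : ObjectProperty.FullSubcategory Z := ⟨B, hB⟩
  let f' : A' ⟶ M' := ObjectProperty.homMk f
  let g' : M' ⟶ B' := ObjectProperty.homMk g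
  Mono f' ∧ Epi g' ∧ ∃ w : f' ≫ g' = 0, (ShortComplex.mk f' g' w).Exact

variable (C : Type u) [Category.{v} C] [Preadditive C] [HasZeroObject C]
  [HasShift C ℤ] [∀ n : ℤ, (shiftFunctor C n).Additive] [Pretriangulated C]

/-- A bounded weight structure `w` on a triangulated category `C`, given by the classes
`wle n = C_{w ≤ n}` and `wge n = C_{w ≥ n}`. -/
structure BoundedWeightStructure where
  wle : ℤ → Set C
  wge : ℤ → Set C
  wle_iso : ∀ (n : ℤ) ⦃X Y : C⦄, (X ≅ Y) → X ∈ wle n → Y ∈ wle n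
  wge_iso : ∀ (n : ℤ) ⦃X Y : C⦄, (X ≅ Y) → X ∈ wge n → Y ∈ wge n
  wle_summand : ∀ (n : ℤ) ⦃X Y : C⦄ (i : X ⟶ Y) (r : Y ⟶ X),
    i ≫ r = 𝟙 X → Y ∈ wle n → X ∈ wle n
  wge_summand : ∀ (n : ℤ) ⦃X Y : C⦄ (i : X ⟶ Y) (r : Y ⟶ X),
    i ≫ r = 𝟙 X → Y ∈ wge n → X ∈ wge n
  wle_zero : (0 : C) ∈ wle 0
  wge_zero : (0 : C) ∈ wge 0
  /-- `C_{w ≤ n} := C_{w ≤ 0}[n]` -/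
  wle_shift : ∀ (n k : ℤ) (X : C), X ∈ wle n ↔ X⟦k⟧ ∈ wle (n + k)
  wge_shift : ∀ (n k : ℤ) (X : C), X ∈ wge n ↔ X⟦k⟧ ∈ wge (n + k)
  wle_mono : ∀ n : ℤ, wle n ⊆ wle (n + 1)
  wge_anti : ∀ n : ℤ, wge (n + 1) ⊆ wge n
  w_orth : ∀ ⦃X Y : C⦄, X ∈ wle 0 → Y ∈ wge 1 → ∀ f : X ⟶ Y, f = 0
  w_dec : ∀ M : C, ∃ (A B : C) (f : A ⟶ M) (g : M ⟶ B) (h : B ⟶ A⟦(1 : ℤ)⟧),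
    Triangle.mk f g h ∈ (distTriang C) ∧ A ∈ wle 0 ∧ B ∈ wge 1
  w_bounded : ∀ M : C, ∃ m n : ℤ, M ∈ wge m ∧ M ∈ wle n

/-- The heart `C_{w = n}` of a (bounded) weight structure. -/
def BoundedWeightStructure.wEq (w : BoundedWeightStructure C) (n : ℤ) : Set C :=
  w.wle n ∩ w.wge n

variable [HasFiniteBiproducts C]

/-- A bounded weight structure and a bounded t-structure on `C` satisfying the
transversality properties (a)–(d). -/
structure TransversalPackage extends BoundedWeightStructure C, BoundedTStructure C where
  /-- (a): each `C_{w = n}^{t = m}` is abelian ... -/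
  wt_abelian : ∀ (n m : ℤ),
    Abelian (ObjectProperty.FullSubcategory (fun X : C => (X ∈ wle n ∧ X ∈ wge n) ∧ (X ∈ tle m ∧ X ∈ tge m)))
  /-- (a): ... and semisimple (every monomorphism splits) ... -/
  wt_semisimple : ∀ (n m : ℤ)
    ⦃X Y : ObjectProperty.FullSubcategory (fun X : C => (X ∈ wle n ∧ X ∈ wge n) ∧ (X ∈ tle m ∧ X ∈ tge m))⦄
    (f : X ⟶ Y), Mono f → ∃ r : Y ⟶ X, f ≫ r = 𝟙 X
  /-- (a): ... and every object of `C_{w = 0}` is isomorphic to a finite direct sum of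
  objects of the categories `C_{w = 0}^{t = m}`, `m ∈ ℤ` -/
  wheart_sum : ∀ X : C, X ∈ wle 0 → X ∈ wge 0 →
    ∃ (k : ℕ) (Y : Fin k → C) (m : Fin k → ℤ),
      (∀ i, (Y i ∈ wle 0 ∧ Y i ∈ wge 0) ∧ (Y i ∈ tle (m i) ∧ Y i ∈ tge (m i))) ∧
      Nonempty (X ≅ ⨁ Y)
  /-- (b): for fixed `m` and `n₁ ≠ n₂`, every morphism from an object of `C_{w = n₁}^{t = m}`
  to an object of `C_{w = n₂}^{t = m}` is zero -/
  wt_hom_vanish : ∀ (m n₁ n₂ : ℤ), n₁ ≠ n₂ → ∀ ⦃X Y : C⦄,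
    X ∈ wle n₁ → X ∈ wge n₁ → X ∈ tle m → X ∈ tge m →
    Y ∈ wle n₂ → Y ∈ wge n₂ → Y ∈ tle m → Y ∈ tge m → ∀ f : X ⟶ Y, f = 0
  /-- (c): every object of `C^{t = m}` admits weight filtrations concentrated at any `n`,
  with outer terms in `C^{t = m}`, which are short exact sequences in `C^{t = m}` -/
  t_weight_filtration : ∀ (m n : ℤ) (M : C) (hM : M ∈ tle m ∧ M ∈ tge m),
    ∃ (A B : C) (hA : A ∈ tle m ∧ A ∈ tge m) (hB : B ∈ tle m ∧ B ∈ tge m)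
      (f : A ⟶ M) (g : M ⟶ B) (δ : B ⟶ A⟦(1 : ℤ)⟧),
      Triangle.mk f g δ ∈ (distTriang C) ∧ A ∈ wle (n - 1) ∧ B ∈ wge n ∧
      IsShortExactInSub (fun X : C => X ∈ tle m ∧ X ∈ tge m) hA hM hB f g
  /-- (d): the truncation functors preserve `C_{w ≤ n}` and `C_{w ≥ n}` -/
  τle_wle : ∀ (m n : ℤ) (X : C), X ∈ wle n → (τle m).obj X ∈ wle n
  τle_wge : ∀ (m n : ℤ) (X : C), X ∈ wge n → (τle m).obj X ∈ wge n
  τge_wle : ∀ (m n : ℤ) (X : C), X ∈ wle n → (τge m).obj X ∈ wle n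
  τge_wge : ∀ (m n : ℤ) (X : C), X ∈ wge n → (τge m).obj X ∈ wge n


section Aux

variable {C : Type u} [Category.{v} C] [Preadditive C] [HasZeroObject C]
  [HasShift C ℤ] [∀ n : ℤ, (shiftFunctor C n).Additive] [Pretriangulated C]

namespace BoundedWeightStructure

variable (w : BoundedWeightStructure C)

lemma wle_le {a b : ℤ} (h : a ≤ b) : w.wle a ⊆ w.wle b := by
  have aux : ∀ d : ℕ, w.wle a ⊆ w.wle (a + d) := by
    intro d
    induction d with
    | zero => simp only [Nat.cast_zero, add_zero]; exact fun _ h => h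
    | succ d ih =>
      intro X hX
      have := w.wle_mono (a + d) (ih hX)
      rwa [show (a : ℤ) + d + 1 = a + ((d + 1 : ℕ) : ℤ) by push_cast; ring] at this
  intro X hX
  have := aux (b - a).toNat hX
  rwa [show a + (((b - a).toNat : ℕ) : ℤ) = b by omega] at this

lemma wge_le {a b : ℤ} (h : a ≤ b) : w.wge b ⊆ w.wge a := by
  have aux : ∀ d : ℕ, w.wge (a + d) ⊆ w.wge a := by
    intro d
    induction d with
    | zero => simp only [Nat.cast_zero, add_zero]; exact fun _ h => h
    | succ d ih =>
      intro X hX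
      rw [show a + ((d + 1 : ℕ) : ℤ) = (a + d) + 1 by push_cast; ring] at hX
      exact ih (w.wge_anti (a + d) hX)
  intro X hX
  apply aux (b - a).toNat
  rwa [show a + (((b - a).toNat : ℕ) : ℤ) = b by omega]

lemma orth' {a b : ℤ} (h : a < b) {X Y : C} (hX : X ∈ w.wle a) (hY : Y ∈ w.wge b)
    (f : X ⟶ Y) : f = 0 := by
  have h1 : X⟦(-a : ℤ)⟧ ∈ w.wle 0 := by
    have := (w.wle_shift a (-a) X).1 hX
    rwa [add_neg_cancel] at this
  have h2 : Y⟦(-a : ℤ)⟧ ∈ w.wge 1 := by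
    have := (w.wge_shift b (-a) Y).1 hY
    exact w.wge_le (by omega) this
  have h3 := w.w_orth h1 h2 ((shiftFunctor C (-a)).map f)
  exact (shiftFunctor C (-a)).map_injective (by rw [h3, Functor.map_zero])

lemma ext_le₀ (T : Triangle C) (hT : T ∈ distTriang C) (h1 : T.obj₁ ∈ w.wle 0)
    (h3 : T.obj₃ ∈ w.wle 0) : T.obj₂ ∈ w.wle 0 := by
  obtain ⟨A, B, f', g', h', hd, hA, hB⟩ := w.w_dec T.obj₂
  have hg : g' = 0 := by
    obtain ⟨v, hv⟩ := Triangle.yoneda_exact₂ T hT g' (w.w_orth h1 hB _)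
    rw [hv, w.w_orth h3 hB v, comp_zero]
  obtain ⟨s, hs⟩ := Triangle.coyoneda_exact₂ _ hd (𝟙 T.obj₂)
    (by simp [hg]; exact comp_zero)
  exact w.wle_summand 0 s f' hs.symm hA

lemma ext_ge₁ (T : Triangle C) (hT : T ∈ distTriang C) (h1 : T.obj₁ ∈ w.wge 1)
    (h3 : T.obj₃ ∈ w.wge 1) : T.obj₂ ∈ w.wge 1 := by
  obtain ⟨A, B, f', g', h', hd, hA, hB⟩ := w.w_dec T.obj₂
  have hf : f' = 0 := by
    obtain ⟨u, hu⟩ := Triangle.coyoneda_exact₂ T hT f' (w.w_orth hA h3 _)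
    rw [hu, w.w_orth hA h1 u, zero_comp]
  obtain ⟨s, hs⟩ := Triangle.yoneda_exact₂ _ hd (𝟙 T.obj₂)
    (by simp [hf]; exact zero_comp)
  exact w.wge_summand 1 g' s hs.symm hB

lemma ext_le (n : ℤ) (T : Triangle C) (hT : T ∈ distTriang C) (h1 : T.obj₁ ∈ w.wle n)
    (h3 : T.obj₃ ∈ w.wle n) : T.obj₂ ∈ w.wle n := by
  have h1' : T.obj₁⟦(-n : ℤ)⟧ ∈ w.wle 0 := by
    have := (w.wle_shift n (-n) T.obj₁).1 h1
    rwa [add_neg_cancel] at this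
  have h3' : T.obj₃⟦(-n : ℤ)⟧ ∈ w.wle 0 := by
    have := (w.wle_shift n (-n) T.obj₃).1 h3
    rwa [add_neg_cancel] at this
  have key : T.obj₂⟦(-n : ℤ)⟧ ∈ w.wle 0 :=
    w.ext_le₀ _ (Triangle.shift_distinguished T hT (-n)) h1' h3'
  have := (w.wle_shift n (-n) T.obj₂).2
  rw [add_neg_cancel] at this
  exact this key

lemma ext_ge (n : ℤ) (T : Triangle C) (hT : T ∈ distTriang C) (h1 : T.obj₁ ∈ w.wge n)
    (h3 : T.obj₃ ∈ w.wge n) : T.obj₂ ∈ w.wge n := by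
  have h1' : T.obj₁⟦(1 - n : ℤ)⟧ ∈ w.wge 1 := by
    have := (w.wge_shift n (1 - n) T.obj₁).1 h1
    rwa [show n + (1 - n) = 1 by ring] at this
  have h3' : T.obj₃⟦(1 - n : ℤ)⟧ ∈ w.wge 1 := by
    have := (w.wge_shift n (1 - n) T.obj₃).1 h3
    rwa [show n + (1 - n) = 1 by ring] at this
  have key : T.obj₂⟦(1 - n : ℤ)⟧ ∈ w.wge 1 :=
    w.ext_ge₁ _ (Triangle.shift_distinguished T hT (1 - n)) h1' h3'
  have := (w.wge_shift n (1 - n) T.obj₂).2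
  rw [show n + (1 - n) = 1 by ring] at this
  exact this key

end BoundedWeightStructure

namespace TransversalPackage

variable [HasFiniteBiproducts C] (P : TransversalPackage C)

lemma pure_le_zero (r : ℤ) : ∀ (d : ℕ) (a b : ℤ), b < a → ∀ (X Y : C),
    X ∈ P.wle a → X ∈ P.wge a → X ∈ P.tle r → X ∈ P.tge r →
    Y ∈ P.wle b → Y ∈ P.wge (b - d) → Y ∈ P.tle r → Y ∈ P.tge r →
    ∀ f : X ⟶ Y, f = 0 := by
  intro d
  induction d with
  | zero =>
    intro a b hab X Y hX1 hX2 hX3 hX4 hY1 hY2 hY3 hY4 f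
    exact P.wt_hom_vanish r a b (by omega) hX1 hX2 hX3 hX4 hY1 (by simpa using hY2) hY3 hY4 f
  | succ d ih =>
    intro a b hab X Y hX1 hX2 hX3 hX4 hY1 hY2 hY3 hY4 f
    obtain ⟨A, B, hA, hB, fY, gY, δ, hd, hAw, hBw, -⟩ :=
      P.t_weight_filtration r b Y ⟨hY3, hY4⟩
    have hA1 : A⟦(1 : ℤ)⟧ ∈ P.wle b := by
      have := (P.wle_shift (b - 1) 1 A).1 hAw
      rwa [sub_add_cancel] at this
    have hB1 : B ∈ P.wle b :=
      P.toBoundedWeightStructure.ext_le b _ (rot_of_distTriang _ hd) hY1 hA1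
    have hY2' : Y ∈ P.wge (b - 1 - d) := by
      rwa [show b - ((d + 1 : ℕ) : ℤ) = b - 1 - d by push_cast; ring] at hY2
    have hA2 : A ∈ P.wge (b - 1 - d) := by
      refine P.toBoundedWeightStructure.ext_ge (b - 1 - d) _ (inv_rot_of_distTriang _ hd) ?_ hY2'
      have := (P.wge_shift b (-1) B).1 hBw
      exact P.toBoundedWeightStructure.wge_le (by omega) this
    have hgz : f ≫ gY = 0 :=
      P.wt_hom_vanish r a b (by omega) hX1 hX2 hX3 hX4 hB1 hBw hB.1 hB.2 _
    obtain ⟨v, hv⟩ := Triangle.coyoneda_exact₂ _ hd f hgz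
    have hv0 : v = 0 := ih a (b - 1) (by omega) X A hX1 hX2 hX3 hX4 hAw hA2 hA.1 hA.2 v
    rw [hv, hv0, zero_comp]; rfl

lemma pure_le (r a b : ℤ) (hab : b < a) (X Y : C)
    (hX1 : X ∈ P.wle a) (hX2 : X ∈ P.wge a) (hX3 : X ∈ P.tle r) (hX4 : X ∈ P.tge r)
    (hY1 : Y ∈ P.wle b) (hY3 : Y ∈ P.tle r) (hY4 : Y ∈ P.tge r)
    (f : X ⟶ Y) : f = 0 := by
  obtain ⟨m, K, hm, hK⟩ := P.w_bounded Y
  by_cases hbm : b < m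
  · have h0 : 𝟙 Y = 0 := P.toBoundedWeightStructure.orth' hbm hY1 hm (𝟙 Y)
    rw [← Category.comp_id f, h0, comp_zero]
  · push_neg at hbm
    have hY2 : Y ∈ P.wge (b - ((b - m).toNat : ℤ)) := by
      rwa [show b - ((b - m).toNat : ℤ) = m by omega]
    exact P.pure_le_zero r (b - m).toNat a b hab X Y hX1 hX2 hX3 hX4 hY1 hY2 hY3 hY4 f

lemma ge_le_zero (r : ℤ) : ∀ (d : ℕ) (a b : ℤ), b < a → ∀ (X Y : C),
    X ∈ P.wge a → X ∈ P.wle (a + d) → X ∈ P.tle r → X ∈ P.tge r →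
    Y ∈ P.wle b → Y ∈ P.tle r → Y ∈ P.tge r →
    ∀ f : X ⟶ Y, f = 0 := by
  intro d
  induction d with
  | zero =>
    intro a b hab X Y hX2 hX1 hX3 hX4 hY1 hY3 hY4 f
    exact P.pure_le r a b hab X Y (by simpa using hX1) hX2 hX3 hX4 hY1 hY3 hY4 f
  | succ d ih =>
    intro a b hab X Y hX2 hX1 hX3 hX4 hY1 hY3 hY4 f
    obtain ⟨A, B, hA, hB, fX, gX, δ, hd, hAw, hBw, -⟩ :=
      P.t_weight_filtration r (a + 1) X ⟨hX3, hX4⟩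
    have hAle : A ∈ P.wle a := by rwa [show a + 1 - 1 = a by ring] at hAw
    have hAge : A ∈ P.wge a := by
      refine P.toBoundedWeightStructure.ext_ge a _ (inv_rot_of_distTriang _ hd) ?_ hX2
      have := (P.wge_shift (a + 1) (-1) B).1 hBw
      rwa [add_neg_cancel_right] at this
    have hff : fX ≫ f = 0 := P.pure_le r a b hab A Y hAle hAge hA.1 hA.2 hY1 hY3 hY4 _
    obtain ⟨u, hu⟩ := Triangle.yoneda_exact₂ _ hd f hff
    have hBle : B ∈ P.wle (a + 1 + d) := by
      refine P.toBoundedWeightStructure.ext_le (a + 1 + d) _ (rot_of_distTriang _ hd) ?_ ?_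
      · rwa [show a + 1 + (d : ℤ) = a + ((d + 1 : ℕ) : ℤ) by push_cast; ring]
      · have := (P.wle_shift a 1 A).1 hAle
        exact P.toBoundedWeightStructure.wle_le (by omega) this
    have hu0 : u = 0 := ih (a + 1) b (by omega) B Y hBw hBle hB.1 hB.2 hY1 hY3 hY4 u
    rw [hu, hu0, comp_zero]; rfl

lemma ge_le (r a b : ℤ) (hab : b < a) (X Y : C)
    (hX2 : X ∈ P.wge a) (hX3 : X ∈ P.tle r) (hX4 : X ∈ P.tge r)
    (hY1 : Y ∈ P.wle b) (hY3 : Y ∈ P.tle r) (hY4 : Y ∈ P.tge r)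
    (f : X ⟶ Y) : f = 0 := by
  obtain ⟨m, K, hm, hK⟩ := P.w_bounded X
  by_cases hKa : K < a
  · have h0 : 𝟙 X = 0 := P.toBoundedWeightStructure.orth' hKa hK hX2 (𝟙 X)
    rw [← Category.id_comp f, h0, zero_comp]
  · push_neg at hKa
    have hX1 : X ∈ P.wle (a + ((K - a).toNat : ℤ)) := by
      rwa [show a + ((K - a).toNat : ℤ) = K by omega]
    exact P.ge_le_zero r (K - a).toNat a b hab X Y hX2 hX1 hX3 hX4 hY1 hY3 hY4 f

end TransversalPackage

/-- In an abelian category in which every monomorphism splits, every morphism `φ` admits a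
pseudo-inverse `ψ` with `ψ ≫ φ ≫ ψ = ψ` and `φ ≫ ψ ≫ φ = φ`. -/
theorem epi_split {A : Type*} [Category A] [Abelian A]
    (hs : ∀ ⦃X Y : A⦄ (f : X ⟶ Y), Mono f → ∃ r, f ≫ r = 𝟙 X) {X I : A} (e : X ⟶ I)
    [Epi e] : ∃ s : I ⟶ X, s ≫ e = 𝟙 I := by
  obtain ⟨rk, hrk⟩ := hs (kernel.ι e) inferInstance
  have h0 : kernel.ι e ≫ (𝟙 X - rk ≫ kernel.ι e) = 0 := by
    rw [Preadditive.comp_sub, Category.comp_id, ← Category.assoc, hrk, Category.id_comp,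
      sub_self]
  refine ⟨Abelian.epiDesc e _ h0, ?_⟩
  have hes : e ≫ Abelian.epiDesc e _ h0 = 𝟙 X - rk ≫ kernel.ι e := Abelian.comp_epiDesc e _ h0
  rw [← cancel_epi e, ← Category.assoc, hes, Preadditive.sub_comp, Category.id_comp,
    Category.assoc, kernel.condition, comp_zero, sub_zero, Category.comp_id]

theorem pseudo_inv {A : Type*} [Category A] [Abelian A]
    (hs : ∀ ⦃X Y : A⦄ (f : X ⟶ Y), Mono f → ∃ r, f ≫ r = 𝟙 X) {X Y : A} (φ : X ⟶ Y) :
    ∃ ψ : Y ⟶ X, ψ ≫ φ ≫ ψ = ψ ∧ φ ≫ ψ ≫ φ = φ := by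
  obtain ⟨ri, hri⟩ := hs (Abelian.image.ι φ) inferInstance
  obtain ⟨s, hse⟩ := epi_split hs (Abelian.factorThruImage φ)
  have hφ : Abelian.factorThruImage φ ≫ Abelian.image.ι φ = φ := Abelian.image.fac φ
  have hA : ∀ {Z : A} (t : Abelian.image φ ⟶ Z), s ≫ Abelian.factorThruImage φ ≫ t = t := by
    intro Z t; rw [← Category.assoc, hse, Category.id_comp]
  have hB : ∀ {Z : A} (t : Abelian.image φ ⟶ Z), Abelian.image.ι φ ≫ ri ≫ t = t := by
    intro Z t; rw [← Category.assoc, hri, Category.id_comp]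
  refine ⟨ri ≫ s, ?_, ?_⟩
  · have h1 : (ri ≫ s) ≫ (Abelian.factorThruImage φ ≫ Abelian.image.ι φ) ≫ ri ≫ s
        = ri ≫ s := by
      simp only [Category.assoc]; rw [hA, hB]
    rw [hφ] at h1
    exact h1
  · have h2 : (Abelian.factorThruImage φ ≫ Abelian.image.ι φ) ≫ (ri ≫ s) ≫
        (Abelian.factorThruImage φ ≫ Abelian.image.ι φ)
        = Abelian.factorThruImage φ ≫ Abelian.image.ι φ := by
      simp only [Category.assoc]; rw [hB, hA]
    rw [hφ] at h2
    exact h2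

end Aux

/-- Claim (∗) in the proof of Theorem 1.F: given a bounded weight structure `w` and a bounded
t-structure `t` on `C` satisfying the transversality properties (a)–(d), if `M ∈ C^{t=r} ∩ C_{w≥n}`,
`N ∈ C^{t=r} ∩ C_{w≤n}` and `γ : M ⟶ N` is nonzero, then there exists `β : N ⟶ M` such that
`β ∘ γ` is a nonzero idempotent endomorphism of `M`; in particular `γ ∉ rad_C(M, N)`. -/
theorem claim_star (P : TransversalPackage C) (r n : ℤ) (M N : C)
    (hMt : M ∈ P.tle r) (hMt' : M ∈ P.tge r) (hMw : M ∈ P.wge n)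
    (hNt : N ∈ P.tle r) (hNt' : N ∈ P.tge r) (hNw : N ∈ P.wle n)
    (γ : M ⟶ N) (hγ : γ ≠ 0) :
    (∃ β : N ⟶ M, (γ ≫ β) ≫ (γ ≫ β) = γ ≫ β ∧ γ ≫ β ≠ 0) ∧ γ ∉ radical M N := by
  -- weight filtration of `M` concentrated at `n + 1`
  obtain ⟨M', M'', hAM, hBM, fM, gM, δM, hdM, hAMw, hBMw, sesM⟩ :=
    P.t_weight_filtration r (n + 1) M ⟨hMt, hMt'⟩
  have hM'le : M' ∈ P.wle n := by rwa [show n + 1 - 1 = n by ring] at hAMw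
  have hM'ge : M' ∈ P.wge n := by
    refine P.toBoundedWeightStructure.ext_ge n _ (inv_rot_of_distTriang _ hdM) ?_ hMw
    have := (P.wge_shift (n + 1) (-1) M'').1 hBMw
    rwa [add_neg_cancel_right] at this
  -- weight filtration of `N` concentrated at `n`
  obtain ⟨N', N'', hAN, hBN, fN, gN, δN, hdN, hANw, hBNw, -⟩ :=
    P.t_weight_filtration r n N ⟨hNt, hNt'⟩
  have hN''le : N'' ∈ P.wle n := by
    refine P.toBoundedWeightStructure.ext_le n _ (rot_of_distTriang _ hdN) hNw ?_
    have := (P.wle_shift (n - 1) 1 N').1 hANw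
    rwa [sub_add_cancel] at this
  -- the key morphism `φ₀ : M' ⟶ N''` between objects of `C_{w=n}^{t=r}` is nonzero
  set φ₀ : M' ⟶ N'' := fM ≫ γ ≫ gN with hφ₀def
  have hφ0ne : φ₀ ≠ 0 := by
    intro h0
    rw [hφ₀def] at h0
    obtain ⟨u, hu⟩ := Triangle.yoneda_exact₂ _ hdM (γ ≫ gN) h0
    have hu0 : u = 0 :=
      P.ge_le r (n + 1) n (by omega) M'' N'' hBMw hBM.1 hBM.2 hN''le hBN.1 hBN.2 u
    have h2 : γ ≫ gN = 0 := hu.trans (by rw [hu0]; exact comp_zero)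
    obtain ⟨v, hv⟩ := Triangle.coyoneda_exact₂ _ hdN γ h2
    have hv0 : v = 0 :=
      P.ge_le r n (n - 1) (by omega) M N' hMw hMt hMt' hANw hAN.1 hAN.2 v
    exact hγ (by rw [hv, hv0, zero_comp]; rfl)
  -- pseudo-inverse of `φ₀` in the semisimple abelian category `C_{w=n}^{t=r}`
  obtain ⟨ψ, hψ1, hψ2⟩ := @pseudo_inv
    (ObjectProperty.FullSubcategory (fun X : C => (X ∈ P.wle n ∧ X ∈ P.wge n) ∧ (X ∈ P.tle r ∧ X ∈ P.tge r)))
    _ (P.wt_abelian n r) (P.wt_semisimple n r)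
    ⟨M', ⟨⟨hM'le, hM'ge⟩, hAM⟩⟩ ⟨N'', ⟨⟨hN''le, hBNw⟩, hBN⟩⟩ (ObjectProperty.homMk φ₀)
  let ψ₀ : N'' ⟶ M' := ψ.hom
  have k1 : ψ₀ ≫ φ₀ ≫ ψ₀ = ψ₀ := congrArg InducedCategory.Hom.hom hψ1
  have k2 : φ₀ ≫ ψ₀ ≫ φ₀ = φ₀ := congrArg InducedCategory.Hom.hom hψ2
  have k1' : ψ₀ ≫ (fM ≫ γ ≫ gN) ≫ ψ₀ = ψ₀ := by rw [← hφ₀def]; exact k1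
  -- the candidate `β`
  have hidem : (γ ≫ (gN ≫ ψ₀ ≫ fM)) ≫ (γ ≫ (gN ≫ ψ₀ ≫ fM)) = γ ≫ (gN ≫ ψ₀ ≫ fM) := by
    calc (γ ≫ gN ≫ ψ₀ ≫ fM) ≫ γ ≫ gN ≫ ψ₀ ≫ fM
        = γ ≫ gN ≫ (ψ₀ ≫ (fM ≫ γ ≫ gN) ≫ ψ₀) ≫ fM := by simp only [Category.assoc]
      _ = γ ≫ gN ≫ ψ₀ ≫ fM := by rw [k1']
  have hne : γ ≫ (gN ≫ ψ₀ ≫ fM) ≠ 0 := by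
    intro h0
    have hcomp : (φ₀ ≫ ψ₀) ≫ fM = (0 : M' ⟶ M') ≫ fM := by
      rw [zero_comp]
      calc (φ₀ ≫ ψ₀) ≫ fM = ((fM ≫ γ ≫ gN) ≫ ψ₀) ≫ fM := by rw [hφ₀def]
        _ = fM ≫ (γ ≫ gN ≫ ψ₀ ≫ fM) := by simp only [Category.assoc]
        _ = fM ≫ 0 := by rw [h0]
        _ = 0 := comp_zero
    let M't : ObjectProperty.FullSubcategory (fun X : C => X ∈ P.tle r ∧ X ∈ P.tge r) := ⟨M', hAM⟩
    let Mt : ObjectProperty.FullSubcategory (fun X : C => X ∈ P.tle r ∧ X ∈ P.tge r) := ⟨M, ⟨hMt, hMt'⟩⟩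
    let fMt : M't ⟶ Mt := ObjectProperty.homMk fM
    have hmono : Mono fMt := sesM.1
    let q : M' ⟶ M' := φ₀ ≫ ψ₀
    have hcomp' : (ObjectProperty.homMk q : M't ⟶ M't) ≫ fMt = (0 : M't ⟶ M't) ≫ fMt := by
        ext; exact hcomp
    have h2' : (ObjectProperty.homMk q : M't ⟶ M't) = (0 : M't ⟶ M't) :=
      hmono.right_cancellation _ _ hcomp'
    have h2 : φ₀ ≫ ψ₀ = (0 : M' ⟶ M') := congrArg InducedCategory.Hom.hom h2'
    have h3 : φ₀ = 0 := by
      calc φ₀ = (φ₀ ≫ ψ₀) ≫ φ₀ := by rw [Category.assoc, k2]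
        _ = 0 := by rw [h2, zero_comp]
    exact hφ0ne h3
  refine ⟨⟨gN ≫ ψ₀ ≫ fM, hidem, hne⟩, ?_⟩
  intro hrad
  have hi := hrad (gN ≫ ψ₀ ≫ fM)
  have h4 : (𝟙 M - γ ≫ (gN ≫ ψ₀ ≫ fM)) ≫ (γ ≫ (gN ≫ ψ₀ ≫ fM)) = 0 := by
    rw [Preadditive.sub_comp, Category.id_comp, hidem, sub_self]
  haveI := hi
  have h5 : γ ≫ (gN ≫ ψ₀ ≫ fM) =
      inv (𝟙 M - γ ≫ (gN ≫ ψ₀ ≫ fM)) ≫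
        ((𝟙 M - γ ≫ (gN ≫ ψ₀ ≫ fM)) ≫ (γ ≫ (gN ≫ ψ₀ ≫ fM))) := by
    rw [IsIso.inv_hom_id_assoc]
  rw [h4, comp_zero] at h5
  exact hne h5

end Absolute
end

section
/- Let C be a triangulated category carrying a bounded weight structure w and a bounded t-structure t satisfying the transversality properties (a)–(d). Then the heart C_{w=0} of the weight structure is pseudo-abelian (idempotent complete): every idempotent endomorphism e of an object M of C_{w=0} admits a kernel in C_{w=0}, and M decomposes in C_{w=0} as the direct sum of the kernel of e and the kernel of id_M − e. (Corollary 1.Ca (a), pseudo-abelianness) -/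
open CategoryTheory Limits Pretriangulated ZeroObject

namespace Absolute

universe v u

variable (C : Type u) [Category.{v} C] [Preadditive C] [HasZeroObject C]
  [HasShift C ℤ] [∀ n : ℤ, (shiftFunctor C n).Additive] [Pretriangulated C]

variable [HasFiniteBiproducts C]

section PseudoAbelianProof

variable {C}

/-- Membership in the heart of the weight structure. -/
abbrev IsHeart (P : TransversalPackage C) (X : C) : Prop :=
  X ∈ P.wle 0 ∧ X ∈ P.wge 0

/-- Membership in `C_{w=0}^{t=c}`. -/
abbrev Qc (P : TransversalPackage C) (c : ℤ) (X : C) : Prop :=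
  (X ∈ P.wle 0 ∧ X ∈ P.wge 0) ∧ (X ∈ P.tle c ∧ X ∈ P.tge c)

variable (P : TransversalPackage C)

lemma tge_of_le {a b : ℤ} (h : a ≤ b) : P.tge b ⊆ P.tge a := by
  have key : ∀ (k : ℕ) (a : ℤ), P.tge (a + k) ⊆ P.tge a := by
    intro k
    induction k with
    | zero => intro a; simpa using subset_rfl
    | succ n ih =>
      intro a X hX
      refine ih a (P.tge_anti (a + n) ?_)
      convert hX using 2
      push_cast
      ring
  have hb : b = a + ((b - a).toNat : ℤ) := by omega
  rw [hb]
  exact key _ a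

/-- Generalized orthogonality for the t-structure. -/
lemma torth {p q : ℤ} (hpq : p < q) {X Y : C} (hX : X ∈ P.tle p) (hY : Y ∈ P.tge q)
    (f : X ⟶ Y) : f = 0 := by
  have h1 : X⟦p⟧ ∈ P.tle 0 := by
    have := (P.tle_shift p p X).mp hX
    simpa using this
  have h2 : Y⟦p⟧ ∈ P.tge 1 := by
    have := (P.tge_shift q p Y).mp hY
    exact tge_of_le P (by omega) this
  have h3 := P.t_orth h1 h2 ((shiftFunctor C p).map f)
  apply (shiftFunctor C p).map_injective
  simpa using h3

lemma heart_zero : IsHeart P (0 : C) := ⟨P.wle_zero, P.wge_zero⟩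

lemma heart_iso {X Y : C} (e : X ≅ Y) (h : IsHeart P X) : IsHeart P Y :=
  ⟨P.wle_iso 0 e h.1, P.wge_iso 0 e h.2⟩

lemma qc_iso {c : ℤ} {X Y : C} (e : X ≅ Y) (h : Qc P c X) : Qc P c Y :=
  ⟨⟨P.wle_iso 0 e h.1.1, P.wge_iso 0 e h.1.2⟩, ⟨P.tle_iso c e h.2.1, P.tge_iso c e h.2.2⟩⟩

/-- The heart of the weight structure is closed under binary biproducts. -/
lemma heart_biprod {X Y : C} (hX : IsHeart P X) (hY : IsHeart P Y) :
    IsHeart P (X ⊞ Y) := by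
  constructor
  · obtain ⟨A, B, f, g, h, hT, hA, hB⟩ := P.w_dec (X ⊞ Y)
    have hg : g = 0 := by
      refine biprod.hom_ext' _ _ ?_ ?_
      · rw [comp_zero]; exact P.w_orth hX.1 hB _
      · rw [comp_zero]; exact P.w_orth hY.1 hB _
    obtain ⟨r, hr⟩ := Triangle.coyoneda_exact₂ _ hT (𝟙 (X ⊞ Y))
      (by simp [hg]; exact comp_zero)
    exact P.wle_summand 0 r f hr.symm hA
  · have key : (X ⊞ Y)⟦(1 : ℤ)⟧ ∈ P.wge 1 := by
      obtain ⟨A, B, f, g, h, hT, hA, hB⟩ := P.w_dec ((X ⊞ Y)⟦(1 : ℤ)⟧)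
      have hX1 : X⟦(1 : ℤ)⟧ ∈ P.wge 1 := by simpa using (P.wge_shift 0 1 X).mp hX.2
      have hY1 : Y⟦(1 : ℤ)⟧ ∈ P.wge 1 := by simpa using (P.wge_shift 0 1 Y).mp hY.2
      have hf : f = 0 := by
        have h1 : f ≫ (shiftFunctor C (1 : ℤ)).map biprod.fst = 0 := P.w_orth hA hX1 _
        have h2 : f ≫ (shiftFunctor C (1 : ℤ)).map biprod.snd = 0 := P.w_orth hA hY1 _
        calc f = f ≫ (shiftFunctor C (1 : ℤ)).map (𝟙 (X ⊞ Y)) := by simp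
          _ = f ≫ (shiftFunctor C (1 : ℤ)).map
                (biprod.fst ≫ biprod.inl + biprod.snd ≫ biprod.inr) := by
              rw [biprod.total]
          _ = 0 := by
              rw [Functor.map_add, Preadditive.comp_add, Functor.map_comp, Functor.map_comp,
                ← Category.assoc, ← Category.assoc, h1, h2, zero_comp, zero_comp, add_zero]
      obtain ⟨r, hr⟩ := Triangle.yoneda_exact₂ _ hT (𝟙 ((X ⊞ Y)⟦(1 : ℤ)⟧))
        (by simp [hf]; exact zero_comp)
      exact P.wge_summand 1 g r hr.symm hB
    have := (P.wge_shift 0 1 (X ⊞ Y))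
    norm_num at this
    exact this.mpr key

-- no section needed

/-- In the full subcategory on `Z`, assumed abelian, binary biproducts exist and are
characterized categorically.  The family `z` is an "absorbing" family of morphisms
(the zero morphisms of the ambient category); it necessarily coincides with the zero
morphisms of the abelian structure. -/
lemma abelian_sub_biprod {D : Type*} [Category D] (Z : D → Prop)
    [ab : Abelian (ObjectProperty.FullSubcategory Z)]
    (z : ∀ A B : ObjectProperty.FullSubcategory Z, A ⟶ B)
    (hz : ∀ (A B B' : ObjectProperty.FullSubcategory Z) (g : B ⟶ B'), z A B ≫ g = z A B')
    (X Y : ObjectProperty.FullSubcategory Z) :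
    ∃ (Pb : ObjectProperty.FullSubcategory Z) (i1 : X ⟶ Pb) (i2 : Y ⟶ Pb) (p1 : Pb ⟶ X) (p2 : Pb ⟶ Y),
      i1 ≫ p1 = 𝟙 X ∧ i2 ≫ p2 = 𝟙 Y ∧ i1 ≫ p2 = z X Y ∧ i2 ≫ p1 = z Y X ∧
      ∀ (T : ObjectProperty.FullSubcategory Z) (f g : T ⟶ Pb),
        f ≫ p1 = g ≫ p1 → f ≫ p2 = g ≫ p2 → f = g := by
  have h0 : ∀ A B : ObjectProperty.FullSubcategory Z, (0 : A ⟶ B) = z A B := by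
    intro A B
    have h1 : z A (0 : ObjectProperty.FullSubcategory Z) ≫ (0 : (0 : ObjectProperty.FullSubcategory Z) ⟶ B) = z A B :=
      hz A 0 B 0
    rw [comp_zero] at h1
    exact h1
  refine ⟨X ⊞ Y, biprod.inl, biprod.inr, biprod.fst, biprod.snd,
    biprod.inl_fst, biprod.inr_snd, ?_, ?_, ?_⟩
  · rw [biprod.inl_snd, h0]
  · rw [biprod.inr_fst, h0]
  · intro T f g hf hg
    exact biprod.hom_ext f g hf hg



/-- Splitting idempotents on objects of `C_{w=0}^{t=c}`, using that this category
is abelian. -/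
lemma qc_split {c : ℤ} {X : C} (hX : Qc P c X) (p : X ⟶ X) (hp : p ≫ p = p) :
    ∃ (K : C), Qc P c K ∧ ∃ (s : K ⟶ X) (r : X ⟶ K), s ≫ r = 𝟙 K ∧ r ≫ s = p := by
  haveI : Abelian (ObjectProperty.FullSubcategory (fun X : C =>
      (X ∈ P.wle 0 ∧ X ∈ P.wge 0) ∧ (X ∈ P.tle c ∧ X ∈ P.tge c))) := P.wt_abelian 0 c
  obtain ⟨Y, i, e, hie, hei⟩ :=
    IsIdempotentComplete.idempotents_split
      (C := ObjectProperty.FullSubcategory (fun X : C =>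
        (X ∈ P.wle 0 ∧ X ∈ P.wge 0) ∧ (X ∈ P.tle c ∧ X ∈ P.tge c)))
      ⟨X, hX⟩ (ObjectProperty.homMk p) (by ext; exact hp)
  exact ⟨Y.obj, Y.property, i.hom, e.hom, congrArg (·.hom) hie, congrArg (·.hom) hei⟩

/-- `C_{w=0}^{t=c}` is closed under binary biproducts taken in `C`. -/
lemma qc_biprod {c : ℤ} {X Y : C} (hX : Qc P c X) (hY : Qc P c Y) : Qc P c (X ⊞ Y) := by
  haveI : Abelian (ObjectProperty.FullSubcategory (fun X : C =>
      (X ∈ P.wle 0 ∧ X ∈ P.wge 0) ∧ (X ∈ P.tle c ∧ X ∈ P.tge c))) := P.wt_abelian 0 c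
  obtain ⟨Pb, i1, i2, p1, p2, h11, h22, h12, h21, huniq⟩ :=
    abelian_sub_biprod (fun X : C =>
        (X ∈ P.wle 0 ∧ X ∈ P.wge 0) ∧ (X ∈ P.tle c ∧ X ∈ P.tge c))
      (fun A B => ObjectProperty.homMk (0 : A.obj ⟶ B.obj))
      (fun A B B' g => by ext; exact zero_comp) ⟨X, hX⟩ ⟨Y, hY⟩
  let j1 : X ⟶ Pb.obj := i1.hom
  let j2 : Y ⟶ Pb.obj := i2.hom
  let q1 : Pb.obj ⟶ X := p1.hom
  let q2 : Pb.obj ⟶ Y := p2.hom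
  have h11' : j1 ≫ q1 = 𝟙 X := congrArg (·.hom) h11
  have h22' : j2 ≫ q2 = 𝟙 Y := congrArg (·.hom) h22
  have h12' : j1 ≫ q2 = 0 := congrArg (·.hom) h12
  have h21' : j2 ≫ q1 = 0 := congrArg (·.hom) h21
  have kk : ∀ (f g : Pb.obj ⟶ Pb.obj), f ≫ q1 = g ≫ q1 →
      f ≫ q2 = g ≫ q2 → f = g := fun f g hf hg =>
    congrArg (·.hom) (huniq Pb (ObjectProperty.homMk f) (ObjectProperty.homMk g)
      (by ext; exact hf) (by ext; exact hg))
  let F : X ⊞ Y ⟶ Pb.obj := biprod.desc j1 j2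
  let G : Pb.obj ⟶ X ⊞ Y := biprod.lift q1 q2
  have hFp1 : F ≫ q1 = biprod.fst := by
    refine biprod.hom_ext' _ _ ?_ ?_
    · have h : biprod.inl ≫ F = j1 := biprod.inl_desc _ _
      rw [← Category.assoc, h, h11', biprod.inl_fst]
    · have h : biprod.inr ≫ F = j2 := biprod.inr_desc _ _
      rw [← Category.assoc, h, h21', biprod.inr_fst]
  have hFp2 : F ≫ q2 = biprod.snd := by
    refine biprod.hom_ext' _ _ ?_ ?_
    · have h : biprod.inl ≫ F = j1 := biprod.inl_desc _ _
      rw [← Category.assoc, h, h12', biprod.inl_snd]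
    · have h : biprod.inr ≫ F = j2 := biprod.inr_desc _ _
      rw [← Category.assoc, h, h22', biprod.inr_snd]
  have hFG : F ≫ G = 𝟙 (X ⊞ Y) := by
    refine biprod.hom_ext _ _ ?_ ?_
    · rw [Category.assoc]
      have h : G ≫ biprod.fst = q1 := biprod.lift_fst _ _
      rw [h, hFp1, Category.id_comp]
    · rw [Category.assoc]
      have h : G ≫ biprod.snd = q2 := biprod.lift_snd _ _
      rw [h, hFp2, Category.id_comp]
  have hGF : G ≫ F = 𝟙 Pb.obj := by
    refine kk (G ≫ F) (𝟙 Pb.obj) ?_ ?_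
    · rw [Category.assoc, hFp1, Category.id_comp]
      exact biprod.lift_fst _ _
    · rw [Category.assoc, hFp2, Category.id_comp]
      exact biprod.lift_snd _ _
  exact qc_iso P (Iso.symm ⟨F, G, hFG, hGF⟩) Pb.property

/-- Nested binary biproduct of a list of (object, degree) pairs. -/
noncomputable def nrep : List (C × ℤ) → C
  | [] => 0
  | p :: L => p.1 ⊞ nrep L

lemma nrep_vanish (a₀ : ℤ) {V : C} (hV : V ∈ P.tge a₀) :
    ∀ L : List (C × ℤ), (∀ q ∈ L, q.1 ∈ P.tle q.2 ∧ q.2 < a₀) →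
      ∀ f : nrep L ⟶ V, f = 0 := by
  intro L
  induction L with
  | nil =>
    intro _ f
    exact (isZero_zero C).eq_of_src f 0
  | cons q L ih =>
    intro hq
    show ∀ f : q.1 ⊞ nrep L ⟶ V, f = 0
    intro f
    have h1 : (biprod.inl : q.1 ⟶ q.1 ⊞ nrep L) ≫ f =
        biprod.inl ≫ (0 : q.1 ⊞ nrep L ⟶ V) := by
      rw [comp_zero]
      exact torth P (hq q (List.mem_cons_self)).2
        (hq q (List.mem_cons_self)).1 hV _
    have h2 : (biprod.inr : nrep L ⟶ q.1 ⊞ nrep L) ≫ f =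
        biprod.inr ≫ (0 : q.1 ⊞ nrep L ⟶ V) := by
      rw [comp_zero]
      exact ih (fun r hr => hq r (List.mem_cons_of_mem q hr)) _
    exact biprod.hom_ext' f 0 h1 h2

/-- The key recursive splitting lemma: any idempotent endomorphism of a nested
biproduct of objects of `C_{w=0}^{t=c_i}`, with strictly decreasing degrees `c_i`,
splits with splitting object in the heart of the weight structure. -/
lemma rec_split : ∀ L : List (C × ℤ), L.Pairwise (fun p q => q.2 < p.2) →
    (∀ p ∈ L, Qc P p.2 p.1) → ∀ e : nrep L ⟶ nrep L, e ≫ e = e →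
    ∃ (K : C), IsHeart P K ∧
      ∃ (s : K ⟶ nrep L) (r : nrep L ⟶ K), s ≫ r = 𝟙 K ∧ r ≫ s = e := by
  intro L
  induction L with
  | nil =>
    intro _ _ e _
    refine ⟨0, heart_zero P, 0, 0, ?_, ?_⟩
    · exact (isZero_zero C).eq_of_src _ _
    · exact (isZero_zero C).eq_of_src _ _
  | cons p L ih =>
    intro hpair hQ
    obtain ⟨hp1, hpL⟩ := List.pairwise_cons.mp hpair
    have hQp : Qc P p.2 p.1 := hQ p (List.mem_cons_self)
    have hQL : ∀ q ∈ L, Qc P q.2 q.1 := fun q hq => hQ q (List.mem_cons_of_mem p hq)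
    show ∀ e : p.1 ⊞ nrep L ⟶ p.1 ⊞ nrep L, e ≫ e = e →
      ∃ (K : C), IsHeart P K ∧
        ∃ (s : K ⟶ p.1 ⊞ nrep L) (r : p.1 ⊞ nrep L ⟶ K), s ≫ r = 𝟙 K ∧ r ≫ s = e
    intro e he
    have he' := reassoc_of% he
    have mid : ∀ {T S : C} (f : T ⟶ p.1 ⊞ nrep L) (g : p.1 ⊞ nrep L ⟶ S),
        f ≫ g = (f ≫ biprod.fst) ≫ (biprod.inl ≫ g) +
          (f ≫ biprod.snd) ≫ (biprod.inr ≫ g) := by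
      intro T S f g
      calc f ≫ g = f ≫ 𝟙 (p.1 ⊞ nrep L) ≫ g := by rw [Category.id_comp]
        _ = f ≫ (biprod.fst ≫ biprod.inl + biprod.snd ≫ biprod.inr) ≫ g := by
            rw [biprod.total]
        _ = _ := by
            rw [Preadditive.add_comp, Preadditive.comp_add]
            simp only [Category.assoc]
    set a : p.1 ⟶ p.1 := biprod.inl ≫ e ≫ biprod.fst with ha
    set b : p.1 ⟶ nrep L := biprod.inl ≫ e ≫ biprod.snd with hb
    set d : nrep L ⟶ nrep L := biprod.inr ≫ e ≫ biprod.snd with hd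
    have hc : (biprod.inr : nrep L ⟶ p.1 ⊞ nrep L) ≫ e ≫ biprod.fst = 0 := by
      refine nrep_vanish P p.2 hQp.2.2 L ?_ _
      intro q hq
      exact ⟨(hQL q hq).2.1, hp1 q hq⟩
    have hc' := reassoc_of% hc
    have haa : a ≫ a = a := by
      have h1 := mid (biprod.inl ≫ e) (e ≫ biprod.fst)
      simp only [Category.assoc, he', hc, hc', comp_zero, zero_comp, add_zero] at h1
      rw [ha]
      simpa only [Category.assoc] using h1.symm
    have haa' := reassoc_of% haa
    have hdd : d ≫ d = d := by
      have h1 := mid (biprod.inr ≫ e) (e ≫ biprod.snd)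
      simp only [Category.assoc, he', hc, hc', comp_zero, zero_comp, zero_add] at h1
      rw [hd]
      simpa only [Category.assoc] using h1.symm
    have hsum : a ≫ b + b ≫ d = b := by
      have h1 := mid (biprod.inl ≫ e) (e ≫ biprod.snd)
      simp only [Category.assoc, he'] at h1
      rw [ha, hb, hd]
      simpa only [Category.assoc] using h1.symm
    have habd : a ≫ b ≫ d = 0 := by
      have h2 : a ≫ (a ≫ b + b ≫ d) = a ≫ b := by rw [hsum]
      rw [Preadditive.comp_add, haa'] at h2
      rwa [add_eq_left] at h2
    -- split the diagonal entries
    obtain ⟨K₁, hK₁, sa, ra, hsra, hras⟩ := qc_split P hQp a haa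
    obtain ⟨K₂, hK₂, sd, rd, hsrd, hrds⟩ := ih hpL hQL d hdd
    -- conjugating isomorphism
    set h : p.1 ⟶ nrep L := a ≫ b - b ≫ d with hh
    set q : p.1 ⊞ nrep L ⟶ p.1 ⊞ nrep L := biprod.fst ≫ h ≫ biprod.inr with hq
    have hqq : q ≫ q = 0 := by
      rw [hq]
      simp
    have hvv' : (𝟙 (p.1 ⊞ nrep L) + q) ≫ (𝟙 (p.1 ⊞ nrep L) - q) = 𝟙 (p.1 ⊞ nrep L) := by
      simp only [Preadditive.comp_sub, Preadditive.add_comp, Preadditive.sub_comp,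
        Category.id_comp, Category.comp_id, hqq]
      abel
    have hv'v : (𝟙 (p.1 ⊞ nrep L) - q) ≫ (𝟙 (p.1 ⊞ nrep L) + q) = 𝟙 (p.1 ⊞ nrep L) := by
      simp only [Preadditive.comp_add, Preadditive.add_comp, Preadditive.sub_comp,
        Category.id_comp, Category.comp_id, hqq]
      abel
    have hah : a ≫ h = a ≫ b := by
      rw [hh, Preadditive.comp_sub, habd, sub_zero, ← Category.assoc, haa]
    have hhd : h ≫ d = -(b ≫ d) := by
      rw [hh, Preadditive.sub_comp, Category.assoc a b d, habd, Category.assoc b d d, hdd,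
        zero_sub]
    have hεfst : e ≫ (biprod.fst : p.1 ⊞ nrep L ⟶ p.1) = biprod.fst ≫ a := by
      refine biprod.hom_ext' _ _ ?_ ?_
      · simp only [biprod.inl_fst_assoc]; rfl
      · simp only [biprod.inr_fst_assoc, zero_comp]
        exact hc
    have hinrε : (biprod.inr : nrep L ⟶ p.1 ⊞ nrep L) ≫ e = d ≫ biprod.inr := by
      refine biprod.hom_ext _ _ ?_ ?_
      · simp only [Category.assoc, biprod.inr_fst, comp_zero]
        exact hc
      · simp only [Category.assoc, biprod.inr_snd, Category.comp_id]; rfl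
    have hqε : q ≫ e = biprod.fst ≫ (h ≫ d) ≫ biprod.inr := by
      rw [hq]
      simp only [Category.assoc, hinrε]
    have hεq : e ≫ q = biprod.fst ≫ (a ≫ h) ≫ biprod.inr := by
      rw [hq]
      calc e ≫ biprod.fst ≫ h ≫ biprod.inr
          = (e ≫ biprod.fst) ≫ h ≫ biprod.inr := by rw [Category.assoc]
        _ = (biprod.fst ≫ a) ≫ h ≫ biprod.inr := by rw [hεfst]
        _ = biprod.fst ≫ (a ≫ h) ≫ biprod.inr := by simp only [Category.assoc]
    have hqεq : q ≫ e ≫ q = 0 := by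
      rw [hεq, hq]
      simp
    have hhda : h ≫ d - a ≫ h = -b := by
      have hneg : -(a ≫ b + b ≫ d) = -b := congrArg Neg.neg hsum
      rw [hhd, hah, ← hneg]
      abel
    have hdist : (biprod.fst : p.1 ⊞ nrep L ⟶ p.1) ≫ (a ≫ b) ≫
          (biprod.inr : nrep L ⟶ p.1 ⊞ nrep L) +
        biprod.fst ≫ (b ≫ d) ≫ biprod.inr = biprod.fst ≫ b ≫ biprod.inr := by
      rw [← Preadditive.comp_add, ← Preadditive.add_comp, hsum]
    have hexp : (𝟙 (p.1 ⊞ nrep L) + q) ≫ e ≫ (𝟙 (p.1 ⊞ nrep L) - q) =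
        e - biprod.fst ≫ b ≫ biprod.inr := by
      rw [Preadditive.comp_sub, Category.comp_id, Preadditive.add_comp, Category.id_comp,
        Preadditive.comp_sub, hqεq, sub_zero, hεq, hqε, hah, hhd, ← hdist]
      simp only [Preadditive.neg_comp, Preadditive.comp_neg]
      abel
    have hD : (𝟙 (p.1 ⊞ nrep L) + q) ≫ e ≫ (𝟙 (p.1 ⊞ nrep L) - q) = biprod.map a d := by
      rw [hexp]
      apply biprod.hom_ext' <;> apply biprod.hom_ext <;>
        simp [ha, hb, hd, hc, hc']
    have mm : ∀ {X₁ X₂ X₃ Y₁ Y₂ Y₃ : C} (f₁ : X₁ ⟶ X₂) (f₂ : X₂ ⟶ X₃)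
        (g₁ : Y₁ ⟶ Y₂) (g₂ : Y₂ ⟶ Y₃),
        biprod.map f₁ g₁ ≫ biprod.map f₂ g₂ = biprod.map (f₁ ≫ f₂) (g₁ ≫ g₂) := by
      intros
      apply biprod.hom_ext' <;> simp
    have hmapid : biprod.map (𝟙 K₁) (𝟙 K₂) = 𝟙 (K₁ ⊞ K₂) := by
      apply biprod.hom_ext' <;> simp
    have hεrec : e = (𝟙 (p.1 ⊞ nrep L) - q) ≫ biprod.map a d ≫ (𝟙 (p.1 ⊞ nrep L) + q) := by
      calc e = 𝟙 (p.1 ⊞ nrep L) ≫ e ≫ 𝟙 (p.1 ⊞ nrep L) := by simp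
        _ = ((𝟙 _ - q) ≫ (𝟙 _ + q)) ≫ e ≫ ((𝟙 _ - q) ≫ (𝟙 _ + q)) := by rw [hv'v]
        _ = (𝟙 _ - q) ≫ ((𝟙 _ + q) ≫ e ≫ (𝟙 _ - q)) ≫ (𝟙 _ + q) := by
            simp only [Category.assoc]
        _ = (𝟙 _ - q) ≫ biprod.map a d ≫ (𝟙 _ + q) := by rw [hD]
    refine ⟨K₁ ⊞ K₂, heart_biprod P hK₁.1 hK₂,
      biprod.map sa sd ≫ (𝟙 (p.1 ⊞ nrep L) + q),
      (𝟙 (p.1 ⊞ nrep L) - q) ≫ biprod.map ra rd, ?_, ?_⟩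
    · calc (biprod.map sa sd ≫ (𝟙 (p.1 ⊞ nrep L) + q)) ≫
          (𝟙 (p.1 ⊞ nrep L) - q) ≫ biprod.map ra rd
          = biprod.map sa sd ≫ ((𝟙 _ + q) ≫ (𝟙 _ - q)) ≫ biprod.map ra rd := by
            simp only [Category.assoc]
        _ = biprod.map sa sd ≫ biprod.map ra rd := by rw [hvv', Category.id_comp]
        _ = biprod.map (sa ≫ ra) (sd ≫ rd) := mm _ _ _ _
        _ = 𝟙 (K₁ ⊞ K₂) := by rw [hsra, hsrd, hmapid]
    · calc ((𝟙 (p.1 ⊞ nrep L) - q) ≫ biprod.map ra rd) ≫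
          biprod.map sa sd ≫ (𝟙 (p.1 ⊞ nrep L) + q)
          = (𝟙 _ - q) ≫ (biprod.map ra rd ≫ biprod.map sa sd) ≫ (𝟙 _ + q) := by
            simp only [Category.assoc]
        _ = (𝟙 _ - q) ≫ biprod.map a d ≫ (𝟙 _ + q) := by rw [mm, hras, hrds]
        _ = e := hεrec.symm


/-- A mid-swap isomorphism for nested biproducts. -/
noncomputable def swapMid (X Y Z : C) : X ⊞ (Y ⊞ Z) ≅ Y ⊞ (X ⊞ Z) :=
  (biprod.associator X Y Z).symm ≪≫
    biprod.mapIso (biprod.braiding X Y) (Iso.refl Z) ≪≫ biprod.associator Y X Z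

/-- Inserting an element into a strictly sorted list, preserving the nested
biproduct up to isomorphism (merging equal degrees using `qc_biprod`). -/
lemma ins : ∀ L : List (C × ℤ), L.Pairwise (fun p q => q.2 < p.2) →
    (∀ p ∈ L, Qc P p.2 p.1) → ∀ (W : C) (w : ℤ), Qc P w W →
    ∃ L' : List (C × ℤ), L'.Pairwise (fun p q => q.2 < p.2) ∧
      (∀ p ∈ L', Qc P p.2 p.1) ∧
      (∀ p ∈ L', p.2 ≤ w ∨ ∃ q ∈ L, p.2 = q.2) ∧
      Nonempty (W ⊞ nrep L ≅ nrep L') := by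
  intro L
  induction L with
  | nil =>
    intro _ _ W w hW
    refine ⟨[(W, w)], List.pairwise_singleton _ _, ?_, ?_, ⟨Iso.refl _⟩⟩
    · intro p hp
      rw [List.mem_singleton] at hp
      subst hp
      exact hW
    · intro p hp
      rw [List.mem_singleton] at hp
      subst hp
      exact Or.inl le_rfl
  | cons u L ih =>
    intro hpair hQ W w hW
    obtain ⟨hu1, huL⟩ := List.pairwise_cons.mp hpair
    have hQu : Qc P u.2 u.1 := hQ u (List.mem_cons_self)
    have hQL : ∀ q ∈ L, Qc P q.2 q.1 := fun q hq => hQ q (List.mem_cons_of_mem u hq)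
    rcases lt_trichotomy u.2 w with hlt | heq | hgt
    · -- w is strictly largest: prepend
      refine ⟨(W, w) :: u :: L, ?_, ?_, ?_, ⟨Iso.refl _⟩⟩
      · refine List.pairwise_cons.mpr ⟨?_, hpair⟩
        intro q hq
        rcases List.mem_cons.mp hq with h | h
        · rw [h]; exact hlt
        · exact lt_trans (hu1 q h) hlt
      · intro p hp
        rcases List.mem_cons.mp hp with h | h
        · rw [h]; exact hW
        · exact hQ p h
      · intro p hp
        rcases List.mem_cons.mp hp with h | h
        · rw [h]; exact Or.inl le_rfl
        · exact Or.inr ⟨p, h, rfl⟩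
    · -- equal degrees: merge
      have hQu' : Qc P w u.1 := by rw [← heq]; exact hQu
      refine ⟨(W ⊞ u.1, w) :: L, ?_, ?_, ?_, ?_⟩
      · refine List.pairwise_cons.mpr ⟨?_, huL⟩
        intro q hq
        rw [← heq]
        exact hu1 q hq
      · intro p hp
        rcases List.mem_cons.mp hp with h | h
        · rw [h]; exact qc_biprod P hW hQu'
        · exact hQL p h
      · intro p hp
        rcases List.mem_cons.mp hp with h | h
        · rw [h]; exact Or.inl le_rfl
        · exact Or.inr ⟨p, List.mem_cons_of_mem u h, rfl⟩
      · constructor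
        show W ⊞ (u.1 ⊞ nrep L) ≅ (W ⊞ u.1) ⊞ nrep L
        exact (biprod.associator W u.1 (nrep L)).symm
    · -- w is smaller: insert into the tail
      obtain ⟨L'', hp'', hQ'', hb'', ⟨φ''⟩⟩ := ih huL hQL W w hW
      refine ⟨u :: L'', ?_, ?_, ?_, ?_⟩
      · refine List.pairwise_cons.mpr ⟨?_, hp''⟩
        intro q hq
        rcases hb'' q hq with h | ⟨r, hr, hr2⟩
        · exact lt_of_le_of_lt h hgt
        · rw [hr2]; exact hu1 r hr
      · intro p hp
        rcases List.mem_cons.mp hp with h | h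
        · rw [h]; exact hQu
        · exact hQ'' p h
      · intro p hp
        rcases List.mem_cons.mp hp with h | h
        · rw [h]; exact Or.inr ⟨u, List.mem_cons_self, rfl⟩
        · rcases hb'' p h with h' | ⟨r, hr, hr2⟩
          · exact Or.inl h'
          · exact Or.inr ⟨r, List.mem_cons_of_mem u hr, hr2⟩
      · constructor
        show W ⊞ (u.1 ⊞ nrep L) ≅ u.1 ⊞ nrep L''
        exact swapMid W u.1 (nrep L) ≪≫ biprod.mapIso (Iso.refl u.1) φ''

/-- Sorting: every list of heart objects with degrees can be rearranged into a
strictly sorted one with isomorphic nested biproduct. -/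
lemma sort : ∀ L : List (C × ℤ), (∀ p ∈ L, Qc P p.2 p.1) →
    ∃ L' : List (C × ℤ), L'.Pairwise (fun p q => q.2 < p.2) ∧
      (∀ p ∈ L', Qc P p.2 p.1) ∧ Nonempty (nrep L ≅ nrep L') := by
  intro L
  induction L with
  | nil => exact fun _ => ⟨[], List.Pairwise.nil, by simp, ⟨Iso.refl _⟩⟩
  | cons u L ih =>
    intro hQ
    obtain ⟨L₁, hp₁, hQ₁, ⟨φ₁⟩⟩ := ih (fun q hq => hQ q (List.mem_cons_of_mem u hq))
    obtain ⟨L', hp', hQ', _, ⟨φ'⟩⟩ := ins P L₁ hp₁ hQ₁ u.1 u.2 (hQ u (List.mem_cons_self))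
    refine ⟨L', hp', hQ', ?_⟩
    constructor
    show u.1 ⊞ nrep L ≅ nrep L'
    exact biprod.mapIso (Iso.refl u.1) φ₁ ≪≫ φ'

/-- The biproduct over `Fin k` is isomorphic to the nested biproduct of the
corresponding list. -/
lemma fin_iso : ∀ (k : ℕ) (Y : Fin k → C) (m : Fin k → ℤ),
    Nonempty ((⨁ Y) ≅ nrep (List.ofFn fun i => (Y i, m i))) := by
  intro k
  induction k with
  | zero =>
    intro Y m
    have h1 : IsZero (⨁ Y) := by
      rw [IsZero.iff_id_eq_zero]
      apply biproduct.hom_ext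
      intro j
      exact j.elim0
    simp only [List.ofFn_zero]
    exact ⟨h1.isoZero⟩
  | succ k ih =>
    intro Y m
    obtain ⟨φ⟩ := ih (fun i => Y i.succ) (fun i => m i.succ)
    simp only [List.ofFn_succ]
    constructor
    refine (?_ : ⨁ Y ≅ Y 0 ⊞ ⨁ fun i : Fin k => Y i.succ) ≪≫
      biprod.mapIso (Iso.refl (Y 0)) φ
    -- ⨁ Y ≅ Y 0 ⊞ ⨁ (Y ∘ succ)
    refine ⟨biprod.lift (biproduct.π Y 0) (biproduct.lift fun i => biproduct.π Y i.succ),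
      biprod.desc (biproduct.ι Y 0) (biproduct.desc fun i => biproduct.ι Y i.succ), ?_, ?_⟩
    · have hz0 : biproduct.ι Y 0 ≫ (biproduct.lift fun i : Fin k => biproduct.π Y i.succ) =
          0 := by
        apply biproduct.hom_ext
        intro i
        have : (0 : Fin (k+1)) ≠ i.succ := (Fin.succ_ne_zero i).symm
        simp [biproduct.ι_π, this]
      have hsucc : ∀ i : Fin k, biproduct.ι Y i.succ ≫
          (biproduct.lift fun j : Fin k => biproduct.π Y j.succ) =
          biproduct.ι (fun j : Fin k => Y j.succ) i := by
        intro i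
        apply biproduct.hom_ext
        intro j
        by_cases hij : i = j
        · subst hij
          simp
        · have h1 : i.succ ≠ j.succ := fun hh => hij (Fin.succ_inj.mp hh)
          simp [biproduct.ι_π, h1, hij]
      apply biproduct.hom_ext'
      intro j
      induction j using Fin.cases with
      | zero =>
        simp [biprod.lift_desc, Preadditive.comp_add, reassoc_of% hz0]
      | succ i =>
        have h1 : i.succ ≠ 0 := Fin.succ_ne_zero i
        simp [biprod.lift_desc, Preadditive.comp_add, reassoc_of% (hsucc i),
          biproduct.ι_π, h1]
    · apply biprod.hom_ext'
      · apply biprod.hom_ext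
        · simp [biproduct.ι_π]
        · apply biproduct.hom_ext
          intro j
          simp [biproduct.ι_π, (Fin.succ_ne_zero j).symm]
      · apply biprod.hom_ext
        · apply biproduct.hom_ext'
          intro j
          simp [biproduct.ι_π, Fin.succ_ne_zero]
        · apply biproduct.hom_ext
          intro j
          apply biproduct.hom_ext'
          intro i
          simp [biproduct.ι_π, Fin.succ_inj]

/-- Main splitting lemma: every idempotent endomorphism of an object of the
heart of the weight structure splits, with splitting object in the heart. -/
lemma heart_split {M : C} (hM : IsHeart P M) (e : M ⟶ M) (he : e ≫ e = e) :
    ∃ (K : C), IsHeart P K ∧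
      ∃ (s : K ⟶ M) (r : M ⟶ K), s ≫ r = 𝟙 K ∧ r ≫ s = e := by
  obtain ⟨k, Y, m, hY, ⟨φ₀⟩⟩ := P.wheart_sum M hM.1 hM.2
  obtain ⟨φ₁⟩ := fin_iso k Y m
  have hofn : ∀ p ∈ List.ofFn (fun i => (Y i, m i)), Qc P p.2 p.1 := by
    intro p hp
    rw [List.mem_ofFn] at hp
    obtain ⟨i, hi⟩ := hp
    rw [← hi]
    exact hY i
  obtain ⟨L', hp', hQ', ⟨φ₂⟩⟩ := sort P (List.ofFn fun i => (Y i, m i)) hofn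
  let φ : M ≅ nrep L' := φ₀ ≪≫ φ₁ ≪≫ φ₂
  have he' : (φ.inv ≫ e ≫ φ.hom) ≫ (φ.inv ≫ e ≫ φ.hom) = φ.inv ≫ e ≫ φ.hom := by
    simp only [Category.assoc, Iso.hom_inv_id_assoc]
    rw [← Category.assoc e e, he]
  obtain ⟨K, hK, s, r, hsr, hrs⟩ := rec_split P L' hp' hQ' (φ.inv ≫ e ≫ φ.hom) he'
  refine ⟨K, hK, s ≫ φ.inv, φ.hom ≫ r, ?_, ?_⟩
  · rw [Category.assoc, Iso.inv_hom_id_assoc, hsr]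
  · have hrs' := reassoc_of% hrs
    rw [Category.assoc, hrs']
    simp

end PseudoAbelianProof

/-- Corollary 1.Ca (a), pseudo-abelianness of the heart: given a bounded weight structure `w`
and a bounded t-structure `t` on `C` satisfying the transversality properties (a)–(d), every
idempotent endomorphism `e` of an object `M` of the heart `C_{w=0}` admits a kernel in
`C_{w=0}`, and `M` decomposes in `C_{w=0}` as the direct sum of the kernel of `e` and the
kernel of `𝟙 M - e`. -/
theorem corollary_1Ca_pseudoabelian (P : TransversalPackage C)
    (M : C) (hM : M ∈ P.wle 0 ∧ M ∈ P.wge 0)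
    (e : (⟨M, hM⟩ : ObjectProperty.FullSubcategory (fun X : C => X ∈ P.wle 0 ∧ X ∈ P.wge 0)) ⟶ ⟨M, hM⟩)
    (he : e ≫ e = e) :
    ∃ (K K' : ObjectProperty.FullSubcategory (fun X : C => X ∈ P.wle 0 ∧ X ∈ P.wge 0))
      (ι : K ⟶ ⟨M, hM⟩)
      (ρ : (⟨M, hM⟩ : ObjectProperty.FullSubcategory (fun X : C => X ∈ P.wle 0 ∧ X ∈ P.wge 0)) ⟶ K)
      (ι' : K' ⟶ ⟨M, hM⟩)
      (ρ' : (⟨M, hM⟩ : ObjectProperty.FullSubcategory (fun X : C => X ∈ P.wle 0 ∧ X ∈ P.wge 0)) ⟶ K'),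
      (∃ w : ι ≫ e = 0, Nonempty (IsLimit (KernelFork.ofι ι w))) ∧
      (∃ w' : ι' ≫ (𝟙 (⟨M, hM⟩ : ObjectProperty.FullSubcategory
          (fun X : C => X ∈ P.wle 0 ∧ X ∈ P.wge 0)) - e) = 0,
        Nonempty (IsLimit (KernelFork.ofι ι' w'))) ∧
      ι ≫ ρ = 𝟙 K ∧ ι' ≫ ρ' = 𝟙 K' ∧
      ρ ≫ ι + ρ' ≫ ι' =
        𝟙 (⟨M, hM⟩ : ObjectProperty.FullSubcategory (fun X : C => X ∈ P.wle 0 ∧ X ∈ P.wge 0)) := by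
  let f : M ⟶ M := e.hom
  have heC : f ≫ f = f := congrArg (·.hom) he
  obtain ⟨K₂, hK₂, s₂, r₂, hs₂, hr₂⟩ := heart_split P hM f heC
  have h1e : (𝟙 M - f) ≫ (𝟙 M - f) = 𝟙 M - f := by
    rw [Preadditive.sub_comp, Preadditive.comp_sub, Preadditive.comp_sub,
      Category.id_comp, Category.comp_id, Category.id_comp, heC]
    abel
  obtain ⟨K₁, hK₁, s₁, r₁, hs₁, hr₁⟩ := heart_split P hM (𝟙 M - f) h1e
  -- basic consequences
  have hse1 : s₁ ≫ (𝟙 M - f) = s₁ := by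
    rw [← hr₁, ← Category.assoc, hs₁, Category.id_comp]
  have hw : s₁ ≫ f = 0 := by
    have h := hse1
    rw [Preadditive.comp_sub, Category.comp_id] at h
    exact sub_eq_self.mp h
  have hse2 : s₂ ≫ f = s₂ := by
    rw [← hr₂, ← Category.assoc, hs₂, Category.id_comp]
  have hw' : s₂ ≫ (𝟙 M - f) = 0 := by
    rw [Preadditive.comp_sub, Category.comp_id, hse2, sub_self]
  -- factorization lemmas at the level of C
  have fac1 : ∀ (T : C) (g' : T ⟶ M), g' ≫ f = 0 → (g' ≫ r₁) ≫ s₁ = g' := by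
    intro T g' hg'
    rw [Category.assoc, hr₁, Preadditive.comp_sub, Category.comp_id, hg', sub_zero]
  have uniq1 : ∀ (T : C) (m : T ⟶ K₁) (g' : T ⟶ M), m ≫ s₁ = g' → m = g' ≫ r₁ := by
    intro T m g' hm
    rw [← hm, Category.assoc, hs₁, Category.comp_id]
  have fac2 : ∀ (T : C) (g' : T ⟶ M), g' ≫ (𝟙 M - f) = 0 → (g' ≫ r₂) ≫ s₂ = g' := by
    intro T g' hg'
    have hg'' : g' ≫ f = g' := by
      rw [Preadditive.comp_sub, Category.comp_id, sub_eq_zero] at hg'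
      exact hg'.symm
    rw [Category.assoc, hr₂, hg'']
  have uniq2 : ∀ (T : C) (m : T ⟶ K₂) (g' : T ⟶ M), m ≫ s₂ = g' → m = g' ≫ r₂ := by
    intro T m g' hm
    rw [← hm, Category.assoc, hs₂, Category.comp_id]
  refine ⟨⟨K₁, hK₁⟩, ⟨K₂, hK₂⟩, ObjectProperty.homMk s₁, ObjectProperty.homMk r₁,
    ObjectProperty.homMk s₂, ObjectProperty.homMk r₂, ⟨by ext; exact hw, ⟨?_⟩⟩,
    ⟨by ext; exact hw', ⟨?_⟩⟩, by ext; exact hs₁, by ext; exact hs₂, ?_⟩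
  · exact KernelFork.IsLimit.ofι _ _
      (fun {T} g' hg' => ObjectProperty.homMk (g'.hom ≫ r₁ : T.obj ⟶ K₁))
      (fun {T} g' hg' => by ext; exact fac1 T.obj g'.hom (congrArg (·.hom) hg'))
      (fun {T} g' hg' m hm => by ext; exact uniq1 T.obj m.hom g'.hom (congrArg (·.hom) hm))
  · exact KernelFork.IsLimit.ofι _ _
      (fun {T} g' hg' => ObjectProperty.homMk (g'.hom ≫ r₂ : T.obj ⟶ K₂))
      (fun {T} g' hg' => by ext; exact fac2 T.obj g'.hom (congrArg (·.hom) hg'))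
      (fun {T} g' hg' m hm => by ext; exact uniq2 T.obj m.hom g'.hom (congrArg (·.hom) hm))
  · ext
    show (r₁ ≫ s₁ : M ⟶ M) + r₂ ≫ s₂ = 𝟙 M
    rw [hr₁, hr₂]
    abel

end Absolute
end

section
/- Let C be an F-linear additive category over a field F. Let d : M₁ → M₂ and f : M₂ → M₁ be morphisms such that every morphism from M₂ to M₁ is a scalar multiple of f (i.e., Hom_C(M₂, M₁) = F·f), and such that f∘d = c·e for some scalar c ∈ F and some idempotent endomorphism e of M₁. Then d belongs to the radical rad_C(M₁, M₂) if and only if f∘d = 0. (Abstract core of Theorem 4.F (a): with d corresponding to the Lefschetz operator and Hom(M₂,M₁) generated by the class of Z×Z, membership of d in the radical is equivalent to the vanishing of the self-intersection number Z·Z.) -/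
open CategoryTheory Limits

namespace Absolute

universe v u

/-- Abstract core of Theorem 4.F (a): in an `F`-linear additive category over a field `F`,
let `d : M₁ ⟶ M₂` and `f : M₂ ⟶ M₁` be such that every morphism `M₂ ⟶ M₁` is a scalar
multiple of `f`, and such that `f ∘ d = c • e` for some scalar `c ∈ F` and some idempotent
endomorphism `e` of `M₁`. Then `d` belongs to the radical `rad_C(M₁, M₂)` if and only if
`f ∘ d = 0`. -/
theorem theorem_4Fa_core {F : Type*} [Field F] {C : Type u} [Category.{v} C]
    [Preadditive C] [HasFiniteBiproducts C] [CategoryTheory.Linear F C]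
    {M₁ M₂ : C} (d : M₁ ⟶ M₂) (f : M₂ ⟶ M₁)
    (hgen : ∀ g : M₂ ⟶ M₁, ∃ a : F, g = a • f)
    (c : F) (e : M₁ ⟶ M₁) (he : e ≫ e = e) (hfd : d ≫ f = c • e) :
    d ∈ radical M₁ M₂ ↔ d ≫ f = 0 := by
  constructor
  · intro hd
    by_cases hc : c = 0
    · simp [hfd, hc]
    · have h := hd (c⁻¹ • f)
      have heq : 𝟙 M₁ - d ≫ (c⁻¹ • f) = 𝟙 M₁ - e := by
        rw [Linear.comp_smul, hfd, smul_smul, inv_mul_cancel₀ hc, one_smul]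
      rw [heq] at h
      have he0 : e = 0 := by
        have h1 : e ≫ (𝟙 M₁ - e) = 0 := by
          simp [Preadditive.comp_sub, he]
        calc e = e ≫ (𝟙 M₁ - e) ≫ inv (𝟙 M₁ - e) := by simp
        _ = 0 := by rw [← Category.assoc, h1, zero_comp]
      rw [hfd, he0, smul_zero]
  · intro h β
    obtain ⟨a, rfl⟩ := hgen β
    rw [Linear.comp_smul, h, smul_zero, sub_zero]
    infer_instance

end Absolute
end
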